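/- Let a > 0, p ≥ 1 real. The function L(z) := ((a+z)^{p+1} − (a−z)^{p+1}) / (z((a+z)^p + (a−z)^p)) is (weakly) decreasing in z on the interval (0, min(a, 1/2)), and L(z) → p + 1 as z → 0⁺. -/

import Mathlib

open Real

private lemma sinh_mul_le (p : ℝ) (hp : 1 ≤ p) {u : ℝ} (hu : 0 ≤ u) :
    p * Real.sinh u ≤ Real.sinh (p * u) := by
  have hmono : MonotoneOn (fun u => Real.sinh (p * u) - p * Real.sinh u) (Set.Ici 0) := by
    have hder : ∀ x : ℝ, HasDerivAt (fun u => Real.sinh (p * u) - p * Real.sinh u)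
        (Real.cosh (p * x) * p - p * Real.cosh x) x := fun x => by
      have h := (((hasDerivAt_id x).const_mul p).sinh).sub ((Real.hasDerivAt_sinh x).const_mul p)
      simpa [Pi.sub_def] using h
    apply monotoneOn_of_deriv_nonneg (convex_Ici 0)
    · exact fun x _ => ((hder x).continuousAt).continuousWithinAt
    · exact fun x _ => ((hder x).differentiableAt).differentiableWithinAt
    · intro x hx
      rw [interior_Ici, Set.mem_Ioi] at hx
      rw [(hder x).deriv]
      have hc : Real.cosh x ≤ Real.cosh (p * x) := by
        rw [Real.cosh_le_cosh]
        rw [abs_of_pos hx, abs_of_pos (by nlinarith : (0:ℝ) < p * x)]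
        nlinarith
      nlinarith [Real.cosh_pos x]
  have h0 : (0:ℝ) ∈ Set.Ici (0:ℝ) := Set.self_mem_Ici
  have := hmono h0 (Set.mem_Ici.mpr hu) hu
  simpa using this

private lemma key_ineq (p : ℝ) (hp : 1 ≤ p) {x : ℝ} (hx0 : 0 < x) (hx1 : x < 1) :
    p * x ^ p * (1 - x ^ 2) ≤ x * (1 - (x ^ p) ^ 2) := by
  set u : ℝ := -Real.log x with hu
  have hu0 : 0 < u := by
    simp only [hu, Left.nonneg_neg_iff, neg_pos]
    exact Real.log_neg hx0 hx1
  have hxe : x = Real.exp (-u) := by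
    rw [hu, neg_neg, Real.exp_log hx0]
  have hxp : x ^ p = Real.exp (-(p * u)) := by
    rw [Real.rpow_def_of_pos hx0, hu]; ring_nf
  have hs := sinh_mul_le p hp hu0.le
  rw [Real.sinh_eq, Real.sinh_eq] at hs
  have hE1 : Real.exp u * Real.exp (-u) = 1 := by
    rw [← Real.exp_add]; simp
  have hE2 : Real.exp (p * u) * Real.exp (-(p * u)) = 1 := by
    rw [← Real.exp_add]; simp
  have hY : 0 < Real.exp (-(p * u)) := Real.exp_pos _
  rw [hxp, hxe]
  set A := Real.exp u
  set B := Real.exp (-u)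
  set C := Real.exp (p * u)
  set D := Real.exp (-(p * u))
  have hB : (0:ℝ) < B := Real.exp_pos _
  have hD2 : (0:ℝ) < D := Real.exp_pos _
  have h1 : B * D * (p * (A - B)) ≤ B * D * (C - D) := by
    have := mul_le_mul_of_nonneg_left hs (by positivity : (0:ℝ) ≤ B * D)
    nlinarith [this]
  have e1 : p * D * (1 - B ^ 2) = B * D * (p * (A - B)) := by
    linear_combination (-(p * D)) * hE1
  have e2 : B * D * (C - D) = B * (1 - D ^ 2) := by
    linear_combination B * hE2
  rw [e1, ← e2]
  exact h1

private lemma G_mono (p : ℝ) (hp : 1 ≤ p) :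
    MonotoneOn (fun r : ℝ => 2 * (1 - r ^ (p + 1)) / ((1 - r) * (1 + r ^ p)))
      (Set.Ioo 0 1) := by
  have hder : ∀ x ∈ Set.Ioo (0:ℝ) 1,
      HasDerivAt (fun r : ℝ => 2 * (1 - r ^ (p + 1)) / ((1 - r) * (1 + r ^ p)))
        ((2 * -((p + 1) * x ^ p) * ((1 - x) * (1 + x ^ p)) -
          2 * (1 - x ^ (p + 1)) * (-1 * (1 + x ^ p) + (1 - x) * (p * x ^ (p - 1)))) /
          ((1 - x) * (1 + x ^ p)) ^ 2) x ∧
      0 < (1 - x) * (1 + x ^ p) := by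
    intro x hx
    obtain ⟨hx0, hx1⟩ := hx
    have hxp : (0:ℝ) < x ^ p := Real.rpow_pos_of_pos hx0 p
    have hBpos : 0 < (1 - x) * (1 + x ^ p) := by nlinarith
    have hA : HasDerivAt (fun r : ℝ => 2 * (1 - r ^ (p + 1))) (2 * -((p + 1) * x ^ p)) x := by
      have h1 : HasDerivAt (fun r : ℝ => r ^ (p + 1)) ((p + 1) * x ^ (p + 1 - 1)) x :=
        Real.hasDerivAt_rpow_const (Or.inl hx0.ne')
      simp only [add_sub_cancel_right] at h1
      exact ((h1.const_sub 1).const_mul 2)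
    have hB : HasDerivAt (fun r : ℝ => (1 - r) * (1 + r ^ p))
        (-1 * (1 + x ^ p) + (1 - x) * (p * x ^ (p - 1))) x := by
      have h1 : HasDerivAt (fun r : ℝ => r ^ p) (p * x ^ (p - 1)) x :=
        Real.hasDerivAt_rpow_const (Or.inl hx0.ne')
      have h2 : HasDerivAt (fun r : ℝ => 1 - r) (-1 : ℝ) x := by
        simpa using (hasDerivAt_id x).const_sub 1
      exact h2.mul (h1.const_add 1)
    exact ⟨hA.div hB hBpos.ne', hBpos⟩
  apply monotoneOn_of_deriv_nonneg (convex_Ioo 0 1)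
  · exact fun x hx => ((hder x hx).1.continuousAt).continuousWithinAt
  · rw [interior_Ioo]
    exact fun x hx => ((hder x hx).1.differentiableAt).differentiableWithinAt
  · rw [interior_Ioo]
    intro x hx
    obtain ⟨hD, hBpos⟩ := hder x hx
    rw [hD.deriv]
    obtain ⟨hx0, hx1⟩ := hx
    have hkey := key_ineq p hp hx0 hx1
    have hp1 : x ^ (p + 1) = x ^ p * x := Real.rpow_add_one hx0.ne' p
    have hpm : x ^ (p - 1) * x = x ^ p := by
      rw [← Real.rpow_add_one hx0.ne' (p-1)]; ring_nf
    apply div_nonneg _ (sq_nonneg _)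
    have hmul : 0 ≤ x * (2 * -((p + 1) * x ^ p) * ((1 - x) * (1 + x ^ p)) -
        2 * (1 - x ^ p * x) * (-1 * (1 + x ^ p) + (1 - x) * (p * x ^ (p - 1)))) := by
      have hid : x * (2 * -((p + 1) * x ^ p) * ((1 - x) * (1 + x ^ p)) -
          2 * (1 - x ^ p * x) * (-1 * (1 + x ^ p) + (1 - x) * (p * x ^ (p - 1)))) =
          2 * (x * (1 - (x ^ p) ^ 2) - p * x ^ p * (1 - x ^ 2)) := by
        linear_combination (-2 * p * (1 - x ^ p * x) * (1 - x)) * hpm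
      rw [hid]
      linarith
    rw [hp1]
    exact le_of_mul_le_mul_left (by linarith) hx0
  
theorem L_decreasing_and_limit (a p : ℝ) (ha : 0 < a) (hp : 1 ≤ p) :
    AntitoneOn (fun z : ℝ =>
        ((a + z) ^ (p + 1) - (a - z) ^ (p + 1)) / (z * ((a + z) ^ p + (a - z) ^ p)))
      (Set.Ioo 0 (min a (1/2))) ∧
    Filter.Tendsto (fun z : ℝ =>
        ((a + z) ^ (p + 1) - (a - z) ^ (p + 1)) / (z * ((a + z) ^ p + (a - z) ^ p)))
      (nhdsWithin 0 (Set.Ioi 0)) (nhds (p + 1)) := by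
  constructor
  · -- Antitone part
    have hLeq : ∀ z : ℝ, 0 < z → z < a →
        ((a + z) ^ (p + 1) - (a - z) ^ (p + 1)) / (z * ((a + z) ^ p + (a - z) ^ p)) =
        2 * (1 - ((a - z)/(a + z)) ^ (p + 1)) /
          ((1 - (a - z)/(a + z)) * (1 + ((a - z)/(a + z)) ^ p)) := by
      intro z hz0 hza
      have hc : (0:ℝ) < a + z := by linarith
      have hv : (0:ℝ) < a - z := by linarith
      have h1 : ((a - z)/(a + z)) ^ (p + 1) = (a - z) ^ (p + 1) / (a + z) ^ (p + 1) :=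
        Real.div_rpow hv.le hc.le _
      have h2 : ((a - z)/(a + z)) ^ p = (a - z) ^ p / (a + z) ^ p :=
        Real.div_rpow hv.le hc.le _
      have h3 : (a + z) ^ (p + 1) = (a + z) ^ p * (a + z) := Real.rpow_add_one hc.ne' p
      have h4 : (a - z) ^ (p + 1) = (a - z) ^ p * (a - z) := Real.rpow_add_one hv.ne' p
      have hcp : (0:ℝ) < (a + z) ^ p := Real.rpow_pos_of_pos hc p
      have hvp : (0:ℝ) < (a - z) ^ p := Real.rpow_pos_of_pos hv p
      rw [h1, h2, h3, h4]
      field_simp [hz0.ne']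
      ring
    intro z₁ hz₁ z₂ hz₂ hle
    obtain ⟨h10, h1m⟩ := hz₁
    obtain ⟨h20, h2m⟩ := hz₂
    have h1a : z₁ < a := lt_of_lt_of_le h1m (min_le_left _ _)
    have h2a : z₂ < a := lt_of_lt_of_le h2m (min_le_left _ _)
    simp only
    rw [hLeq z₁ h10 h1a, hLeq z₂ h20 h2a]
    have hr1 : (a - z₁)/(a + z₁) ∈ Set.Ioo (0:ℝ) 1 := by
      constructor
      · exact div_pos (by linarith) (by linarith)
      · rw [div_lt_one (by linarith)]; linarith
    have hr2 : (a - z₂)/(a + z₂) ∈ Set.Ioo (0:ℝ) 1 := by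
      constructor
      · exact div_pos (by linarith) (by linarith)
      · rw [div_lt_one (by linarith)]; linarith
    have hrle : (a - z₂)/(a + z₂) ≤ (a - z₁)/(a + z₁) := by
      rw [div_le_div_iff₀ (by linarith) (by linarith)]
      nlinarith
    exact G_mono p hp hr2 hr1 hrle
  · -- Limit part
    have hN : HasDerivAt (fun z : ℝ => (a + z) ^ (p + 1) - (a - z) ^ (p + 1))
        ((p + 1) * a ^ p * 1 - (p + 1) * a ^ p * (-1)) 0 := by
      have h1 : HasDerivAt (fun z : ℝ => (a + z) ^ (p + 1)) ((p + 1) * a ^ p * 1) 0 := by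
        have hb : HasDerivAt (fun z : ℝ => a + z) 1 0 := by
          simpa using (hasDerivAt_id (0:ℝ)).const_add a
        have := (Real.hasDerivAt_rpow_const (p := p + 1) (x := a + 0) (Or.inl (by simpa using ha.ne'))).comp 0 hb
        simpa [add_sub_cancel_right, Function.comp_def] using this
      have h2 : HasDerivAt (fun z : ℝ => (a - z) ^ (p + 1)) ((p + 1) * a ^ p * (-1)) 0 := by
        have hb : HasDerivAt (fun z : ℝ => a - z) (-1) 0 := by
          simpa using (hasDerivAt_id (0:ℝ)).const_sub a
        have := (Real.hasDerivAt_rpow_const (p := p + 1) (x := a - 0) (Or.inl (by simpa using ha.ne'))).comp 0 hb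
        simpa [sub_zero, add_sub_cancel_right, Function.comp_def] using this
      exact h1.sub h2
    have hslope : Filter.Tendsto
        (fun z : ℝ => ((a + z) ^ (p + 1) - (a - z) ^ (p + 1)) / z)
        (nhdsWithin 0 (Set.Ioi 0)) (nhds (2 * ((p + 1) * a ^ p))) := by
      have := hN.hasDerivWithinAt (s := Set.Ioi 0)
      have h := hasDerivWithinAt_iff_tendsto_slope.mp this
      have heq : ∀ z : ℝ, slope (fun z : ℝ => (a + z) ^ (p + 1) - (a - z) ^ (p + 1)) 0 z =
          ((a + z) ^ (p + 1) - (a - z) ^ (p + 1)) / z := by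
        intro z
        simp [slope_def_field]
      have h2 : Filter.Tendsto (fun z : ℝ => ((a + z) ^ (p + 1) - (a - z) ^ (p + 1)) / z)
          (nhdsWithin 0 (Set.Ioi 0 \ {0})) (nhds ((p + 1) * a ^ p * 1 - (p + 1) * a ^ p * (-1))) := by
        refine h.congr' ?_
        filter_upwards with z using heq z
      have hss : Set.Ioi (0:ℝ) \ {0} = Set.Ioi 0 := by
        ext x
        constructor
        · exact fun h => h.1
        · exact fun h => ⟨h, ne_of_gt h⟩
      rw [hss] at h2
      have h3 : (p + 1) * a ^ p * 1 - (p + 1) * a ^ p * (-1) = 2 * ((p + 1) * a ^ p) := by ring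
      rw [h3] at h2
      exact h2
    have hD : Filter.Tendsto (fun z : ℝ => (a + z) ^ p + (a - z) ^ p)
        (nhdsWithin 0 (Set.Ioi 0)) (nhds (2 * a ^ p)) := by
      have h1 : ContinuousAt (fun z : ℝ => (a + z) ^ p + (a - z) ^ p) 0 := by
        have c1 : ContinuousAt (fun z : ℝ => (a + z) ^ p) 0 := by
          exact (Real.continuousAt_rpow_const (a + 0) p (Or.inl (by simpa using ha.ne'))).comp
            (by fun_prop)
        have c2 : ContinuousAt (fun z : ℝ => (a - z) ^ p) 0 := by
          exact (Real.continuousAt_rpow_const (a - 0) p (Or.inl (by simpa using ha.ne'))).comp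
            (by fun_prop)
        exact c1.add c2
      have := h1.continuousWithinAt (s := Set.Ioi 0)
      simpa [ContinuousWithinAt, two_mul] using this
    have hap : (0:ℝ) < a ^ p := Real.rpow_pos_of_pos ha p
    have hfinal := hslope.div hD (by positivity)
    have : (2 * ((p + 1) * a ^ p)) / (2 * a ^ p) = p + 1 := by
      field_simp
    rw [this] at hfinal
    refine hfinal.congr fun z => ?_
    simp only [Pi.div_apply, div_div]
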